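/- Let x₀ ∈ ℝⁿ, φ(x) = log|x - x₀|, and ω ∈ 𝕊^{n-1}. Define ψ(x) = π/2 - arctan( (ω·(x-x₀)) / sqrt(|x-x₀|² - (ω·(x-x₀))²) ) on the open set where |x - x₀|² > (ω·(x - x₀))². Then |∇ψ|² = |∇φ|² and ∇φ · ∇ψ = 0 on this set; that is, ψ solves the eikonal equation associated with φ. -/

import Mathlib

open scoped RealInnerProductSpace

open Real

variable {E : Type*} [NormedAddCommGroup E] [InnerProductSpace ℝ E] [CompleteSpace E]

lemma grad_log (x₀ x : E) (hx : x ≠ x₀) :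
    HasGradientAt (fun y : E => Real.log ‖y - x₀‖) ((‖x - x₀‖ ^ 2)⁻¹ • (x - x₀)) x := by
  have hrpos : (0:ℝ) < ‖x - x₀‖ := norm_pos_iff.mpr (sub_ne_zero.mpr hx)
  have hfun : (fun y : E => Real.log ‖y - x₀‖) = fun y : E => (1/2) * Real.log (‖y - x₀‖ ^ 2) := by
    funext y
    rw [Real.log_pow]; push_cast; ring
  rw [hasGradientAt_iff_hasFDerivAt, hfun]
  have hu : HasFDerivAt (fun y : E => y - x₀) (ContinuousLinearMap.id ℝ E) x :=
    (hasFDerivAt_id x).sub_const x₀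
  have hQ := hu.norm_sq
  have hL := (hQ.log (by positivity)).const_mul (1/2)
  refine hL.congr_fderiv ?_
  ext v
  simp [InnerProductSpace.toDual_apply_apply, real_inner_smul_left, two_smul]
  field_simp
  ring

lemma grad_psi (x₀ ω x : E) (hx : ⟪ω, x - x₀⟫ ^ 2 < ‖x - x₀‖ ^ 2) :
    HasGradientAt (fun y : E => Real.pi / 2 - Real.arctan (⟪ω, y - x₀⟫ /
        Real.sqrt (‖y - x₀‖ ^ 2 - ⟪ω, y - x₀⟫ ^ 2)))
      ((⟪ω, x - x₀⟫ / (‖x - x₀‖ ^ 2 * Real.sqrt (‖x - x₀‖ ^ 2 - ⟪ω, x - x₀⟫ ^ 2))) • (x - x₀)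
        - (Real.sqrt (‖x - x₀‖ ^ 2 - ⟪ω, x - x₀⟫ ^ 2))⁻¹ • ω) x := by
  set u := x - x₀ with hu_def
  set a := ⟪ω, x - x₀⟫ with ha_def
  set r2 := ‖x - x₀‖ ^ 2 with hr2_def
  have hs2pos : (0:ℝ) < r2 - a ^ 2 := by linarith
  set s := Real.sqrt (r2 - a ^ 2) with hs_def
  have hspos : (0:ℝ) < s := Real.sqrt_pos.mpr hs2pos
  have hsne : s ≠ 0 := hspos.ne'
  have hssq : s ^ 2 = r2 - a ^ 2 := Real.sq_sqrt hs2pos.le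
  have hr2pos : (0:ℝ) < r2 := lt_of_le_of_lt (sq_nonneg a) hx
  rw [hasGradientAt_iff_hasFDerivAt]
  have hu : HasFDerivAt (fun y : E => y - x₀) (ContinuousLinearMap.id ℝ E) x :=
    (hasFDerivAt_id x).sub_const x₀
  have hA : HasFDerivAt (fun y : E => ⟪ω, y - x₀⟫) ((innerSL ℝ ω).comp (ContinuousLinearMap.id ℝ E)) x :=
    ((innerSL ℝ ω).hasFDerivAt).comp x hu
  have hQ := hu.norm_sq
  have hT := hQ.sub (hA.mul hA)
  have hS := hT.sqrt (by show ‖x - x₀‖ ^ 2 - ⟪ω, x - x₀⟫ * ⟪ω, x - x₀⟫ ≠ 0; rw [show ⟪ω, x - x₀⟫ * ⟪ω, x - x₀⟫ = a ^ 2 by rw [ha_def]; ring, ← hr2_def]; exact hs2pos.ne')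
  have hSinv := (hasDerivAt_inv (show Real.sqrt (‖x - x₀‖ ^ 2 - ⟪ω, x - x₀⟫ * ⟪ω, x - x₀⟫) ≠ 0 by
      rw [show ⟪ω, x - x₀⟫ * ⟪ω, x - x₀⟫ = a ^ 2 by rw [ha_def]; ring, ← hr2_def, ← hs_def]; exact hsne)).comp_hasFDerivAt x hS
  have hDiv := hA.mul hSinv
  have hArc := hDiv.arctan
  have hF := hArc.const_sub (Real.pi / 2)
  have hfun : (fun y : E => Real.pi / 2 - Real.arctan (⟪ω, y - x₀⟫ /
      Real.sqrt (‖y - x₀‖ ^ 2 - ⟪ω, y - x₀⟫ ^ 2)))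
      = fun y : E => Real.pi / 2 - Real.arctan (⟪ω, y - x₀⟫ *
        (Real.sqrt (‖y - x₀‖ ^ 2 - ⟪ω, y - x₀⟫ * ⟪ω, y - x₀⟫))⁻¹) := by
    funext y; rw [pow_two (⟪ω, y - x₀⟫ : ℝ), div_eq_mul_inv (⟪ω, y - x₀⟫ : ℝ)]
  rw [hfun]
  refine hF.congr_fderiv ?_
  have h1 : (⟪ω, x - x₀⟫ : ℝ) * ⟪ω, x - x₀⟫ = a ^ 2 := by rw [ha_def]; ring
  have hkey : 1 + (a * s⁻¹) ^ 2 = r2 / s ^ 2 := by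
    field_simp
    rw [hssq]; ring
  ext v
  simp only [Function.comp_apply, id_eq, ContinuousLinearMap.coe_comp',
    ContinuousLinearMap.smul_apply, ContinuousLinearMap.neg_apply, ContinuousLinearMap.add_apply,
    ContinuousLinearMap.sub_apply, ContinuousLinearMap.coe_smul', Pi.smul_apply, innerSL_apply_apply,
    ContinuousLinearMap.id_apply, smul_eq_mul, InnerProductSpace.toDual_apply_apply,
    ContinuousLinearMap.coe_id', nsmul_eq_mul, Nat.cast_ofNat, Pi.sub_apply, Pi.mul_apply]
  rw [h1, ← hr2_def, ← ha_def, ← hs_def, hkey, hu_def]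
  simp only [inner_sub_left, real_inner_smul_left]
  have hs2 : s ^ 2 = r2 - a ^ 2 := hssq
  have hs2' : s ^ 2 = ‖x - x₀‖ ^ 2 - a ^ 2 := hssq
  field_simp
  ring_nf
  linear_combination (-(2 * (⟪ω, v⟫ : ℝ))) * hs2'

/-- With `φ(x) = log ‖x - x₀‖` and
`ψ(x) = π/2 - arctan( ω·(x-x₀) / √(‖x-x₀‖² - (ω·(x-x₀))²) )`, on the open set where
`‖x - x₀‖² > (ω·(x-x₀))²` one has `‖∇ψ‖² = ‖∇φ‖²` and `∇φ·∇ψ = 0`. -/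
theorem stmt_2 (n : ℕ) (hn : 2 ≤ n) (x₀ ω : EuclideanSpace ℝ (Fin n)) (hω : ‖ω‖ = 1)
    (x : EuclideanSpace ℝ (Fin n)) (hx : ⟪ω, x - x₀⟫ ^ 2 < ‖x - x₀‖ ^ 2) :
    ‖gradient (fun y : EuclideanSpace ℝ (Fin n) =>
        Real.pi / 2 - Real.arctan (⟪ω, y - x₀⟫ /
          Real.sqrt (‖y - x₀‖ ^ 2 - ⟪ω, y - x₀⟫ ^ 2))) x‖ ^ 2
      = ‖gradient (fun y : EuclideanSpace ℝ (Fin n) => Real.log ‖y - x₀‖) x‖ ^ 2 ∧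
    ⟪gradient (fun y : EuclideanSpace ℝ (Fin n) => Real.log ‖y - x₀‖) x,
      gradient (fun y : EuclideanSpace ℝ (Fin n) =>
        Real.pi / 2 - Real.arctan (⟪ω, y - x₀⟫ /
          Real.sqrt (‖y - x₀‖ ^ 2 - ⟪ω, y - x₀⟫ ^ 2))) x⟫ = 0 := by
  have hr2pos : (0:ℝ) < ‖x - x₀‖ ^ 2 := lt_of_le_of_lt (sq_nonneg _) hx
  have hxne : x ≠ x₀ := by
    intro h; rw [h] at hr2pos; simp at hr2pos
  set a : ℝ := ⟪ω, x - x₀⟫ with ha_def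
  set r2 : ℝ := ‖x - x₀‖ ^ 2 with hr2_def
  have hs2pos : (0:ℝ) < r2 - a ^ 2 := by linarith
  set s : ℝ := Real.sqrt (r2 - a ^ 2) with hs_def
  have hspos : (0:ℝ) < s := Real.sqrt_pos.mpr hs2pos
  have hssq : s ^ 2 = r2 - a ^ 2 := Real.sq_sqrt hs2pos.le
  have hgφ := (grad_log x₀ x hxne).gradient
  have hgψ := (grad_psi x₀ ω x hx).gradient
  rw [hgφ, hgψ]
  obtain ⟨u, hu⟩ : ∃ u, x - x₀ = u := ⟨_, rfl⟩
  rw [hu]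
  have e_a : (⟪ω, u⟫ : ℝ) = a := by rw [ha_def, hu]
  have e_r : ‖u‖ ^ 2 = r2 := by rw [hr2_def, hu]
  have e_uu : (⟪u, u⟫ : ℝ) = r2 := by rw [real_inner_self_eq_norm_sq, e_r]
  have e_uω : (⟪u, ω⟫ : ℝ) = a := by rw [real_inner_comm, e_a]
  have hωω : (⟪ω, ω⟫ : ℝ) = 1 := by
    rw [real_inner_self_eq_norm_sq, hω]; norm_num
  rw [e_a, e_r, ← hs_def]
  constructor
  · rw [← real_inner_self_eq_norm_sq, ← real_inner_self_eq_norm_sq]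
    simp only [inner_sub_left, inner_sub_right, real_inner_smul_left, real_inner_smul_right,
      e_uu, e_uω, e_a, hωω]
    field_simp
    ring_nf
    have hssq' : s ^ 2 = ‖x - x₀‖ ^ 2 - a ^ 2 := hssq
    linear_combination (-1 : ℝ) * hssq'
  · simp only [inner_sub_right, real_inner_smul_left, real_inner_smul_right,
      e_uu, e_uω, e_a, hωω]
    field_simp
    ring
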